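/- Let α > 1/2, set γ(α) = α/(2α−1) and z(y,α) = y²(2α−1)/2, and let G(y,α) = y·M(γ(α), 3/2, z(y,α)) + [Γ(γ(α)−1/2) / (√(2(2α−1))·Γ(γ(α)))]·M(γ(α)−1/2, 1/2, z(y,α)). Then there exists B > 0 such that G(B,α) = B·G_y(B,α), where G_y denotes the derivative of G with respect to y. -/

import Mathlib

open Real Filter Polynomial

/-- Confluent hypergeometric function of the first kind,
`M(γ,β,z) = ∑ (γ)⁽ⁿ⁾ zⁿ / ((β)⁽ⁿ⁾ n!)`. -/
noncomputable def M (γ β z : ℝ) : ℝ :=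
  ∑' n : ℕ, ((ascPochhammer ℝ n).eval γ * z ^ n) /
    ((ascPochhammer ℝ n).eval β * (Nat.factorial n : ℝ))

/-- The candidate solution for `α > 1/2`. -/
noncomputable def G (α y : ℝ) : ℝ :=
  y * M (α / (2 * α - 1)) (3 / 2) (y ^ 2 * (2 * α - 1) / 2) +
    Real.Gamma (α / (2 * α - 1) - 1 / 2) /
      (Real.sqrt (2 * (2 * α - 1)) * Real.Gamma (α / (2 * α - 1))) *
    M (α / (2 * α - 1) - 1 / 2) (1 / 2) (y ^ 2 * (2 * α - 1) / 2)

section Minfra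
open FormalMultilinearSeries Topology

/-- coefficients of the power series of `M γ β`. -/
noncomputable def Mc (γ β : ℝ) : ℕ → ℝ :=
  fun n => (ascPochhammer ℝ n).eval γ / ((ascPochhammer ℝ n).eval β * (Nat.factorial n : ℝ))

variable {γ β : ℝ}

lemma Mc_pos (hγ : 0 < γ) (hβ : 0 < β) (n : ℕ) : 0 < Mc γ β n := by
  unfold Mc
  have h1 := ascPochhammer_pos n γ hγ
  have h2 := ascPochhammer_pos n β hβ
  have h3 : (0:ℝ) < n.factorial := by exact_mod_cast n.factorial_pos
  positivity

lemma Mc_ratio (hγ : 0 < γ) (hβ : 0 < β) (n : ℕ) :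
    Mc γ β (n+1) / Mc γ β n = (γ + n) / ((β + n) * (n + 1)) := by
  have h1 := (ascPochhammer_pos n γ hγ).ne'
  have h2 := (ascPochhammer_pos n β hβ).ne'
  have h3 : ((n.factorial : ℝ)) ≠ 0 := by
    exact_mod_cast n.factorial_ne_zero
  have h4 : (β + n) ≠ 0 := by positivity
  have h5 : ((n:ℝ) + 1) ≠ 0 := by positivity
  unfold Mc
  rw [ascPochhammer_succ_eval, ascPochhammer_succ_eval, Nat.factorial_succ]
  push_cast
  field_simp

lemma Mc_radius (hγ : 0 < γ) (hβ : 0 < β) :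
    (FormalMultilinearSeries.ofScalars ℝ (Mc γ β)).radius = ⊤ := by
  apply ofScalars_radius_eq_top_of_tendsto ℝ _
    (Eventually.of_forall fun n => (Mc_pos hγ hβ n).ne')
  have heq : (fun n : ℕ => ‖Mc γ β n.succ‖ / ‖Mc γ β n‖)
      = fun n : ℕ => (γ + n) / ((β + n) * (n + 1)) := by
    funext n
    rw [Real.norm_eq_abs, Real.norm_eq_abs, abs_of_pos (Mc_pos hγ hβ _),
      abs_of_pos (Mc_pos hγ hβ _)]
    exact Mc_ratio hγ hβ n
  rw [heq]
  have hub : ∀ n : ℕ, (γ + n) / ((β + n) * (n + 1)) ≤ (γ/β + 1) * (1/((n:ℝ)+1)) := by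
    intro n
    have hn : (0:ℝ) ≤ n := n.cast_nonneg
    have hq : γ/β*β = γ := div_mul_cancel₀ γ hβ.ne'
    rw [mul_one_div, div_le_div_iff₀ (by positivity) (by positivity)]
    nlinarith [mul_nonneg (div_nonneg hγ.le hβ.le) (mul_nonneg hn (by positivity : (0:ℝ) ≤ (n:ℝ)+1)),
      mul_nonneg hn (by positivity : (0:ℝ) ≤ (n:ℝ)+1)]
  have hlb : ∀ n : ℕ, (0:ℝ) ≤ (γ + n) / ((β + n) * (n + 1)) := by
    intro n
    have hn : (0:ℝ) ≤ n := n.cast_nonneg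
    positivity
  have hu : Tendsto (fun n : ℕ => (γ/β + 1) * (1/((n:ℝ)+1))) atTop (𝓝 0) := by
    have := tendsto_one_div_add_atTop_nhds_zero_nat.const_mul (γ/β + 1)
    simpa using this
  exact tendsto_of_tendsto_of_tendsto_of_le_of_le tendsto_const_nhds hu hlb hub

lemma M_eq (z : ℝ) : (FormalMultilinearSeries.ofScalars ℝ (Mc γ β)).sum z = M γ β z := by
  unfold FormalMultilinearSeries.sum M
  refine tsum_congr fun n => ?_
  rw [ofScalars_apply_eq, smul_eq_mul, Mc, div_mul_eq_mul_div]

lemma M_hasFPSOB (hγ : 0 < γ) (hβ : 0 < β) :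
    HasFPowerSeriesOnBall (M γ β) (FormalMultilinearSeries.ofScalars ℝ (Mc γ β)) 0 ⊤ := by
  have h := (FormalMultilinearSeries.ofScalars ℝ (Mc γ β)).hasFPowerSeriesOnBall
    (by rw [Mc_radius hγ hβ]; exact ENNReal.zero_lt_top)
  rw [Mc_radius hγ hβ] at h
  exact (funext (M_eq (γ := γ) (β := β)) : _ = M γ β) ▸ h

lemma M_hasSum (hγ : 0 < γ) (hβ : 0 < β) (z : ℝ) :
    HasSum (fun n : ℕ => ((ascPochhammer ℝ n).eval γ * z ^ n) /
      ((ascPochhammer ℝ n).eval β * (Nat.factorial n : ℝ))) (M γ β z) := by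
  have h := (M_hasFPSOB hγ hβ).hasSum (y := z) (by simp)
  simp only [ofScalars_apply_eq, smul_eq_mul, zero_add] at h
  have hfun : (fun n : ℕ => ((ascPochhammer ℝ n).eval γ * z ^ n) /
      ((ascPochhammer ℝ n).eval β * (Nat.factorial n : ℝ)))
      = fun n : ℕ => Mc γ β n * z ^ n := by
    funext n
    rw [Mc, div_mul_eq_mul_div]
  rw [hfun]
  exact h

lemma M_diff (hγ : 0 < γ) (hβ : 0 < β) (z : ℝ) : DifferentiableAt ℝ (M γ β) z :=
  ((M_hasFPSOB hγ hβ).analyticOnNhd z (by simp)).differentiableAt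

lemma M_ge_linear (hγ : 0 < γ) (hβ : 0 < β) {z : ℝ} (hz : 0 ≤ z) :
    1 + γ * z / β ≤ M γ β z := by
  have hterm : ∀ n : ℕ, 0 ≤ ((ascPochhammer ℝ n).eval γ * z ^ n) /
      ((ascPochhammer ℝ n).eval β * (Nat.factorial n : ℝ)) := by
    intro n
    have h1 := ascPochhammer_pos n γ hγ
    have h2 := ascPochhammer_pos n β hβ
    have h3 : (0:ℝ) < n.factorial := by exact_mod_cast n.factorial_pos
    positivity
  have := Summable.sum_le_tsum (Finset.range 2) (fun i _ => hterm i) (M_hasSum hγ hβ z).summable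
  rw [(M_hasSum hγ hβ z).tsum_eq] at this
  refine le_trans (le_of_eq ?_) this
  rw [Finset.sum_range_succ, Finset.sum_range_one]
  simp [ascPochhammer_zero, ascPochhammer_one, mul_comm]

lemma M_ge_one (hγ : 0 < γ) (hβ : 0 < β) {z : ℝ} (hz : 0 ≤ z) : 1 ≤ M γ β z := by
  have h := M_ge_linear hγ hβ hz
  have : 0 ≤ γ * z / β := by positivity
  linarith

end Minfra

theorem stmt_12 (α : ℝ) (hα : 1 / 2 < α) :
    ∃ B : ℝ, 0 < B ∧ G α B = B * deriv (fun y => G α y) B := by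
  have hα0 : 0 < α := by linarith
  have ha : 0 < 2 * α - 1 := by linarith
  set γ := α / (2 * α - 1) with hγdef
  have hγpos : 0 < γ := div_pos hα0 ha
  have hγ2 : γ - 1/2 = 1/(2*(2*α-1)) := by
    rw [hγdef, div_sub_div _ _ ha.ne' two_ne_zero, div_eq_div_iff (by positivity) (by positivity)]; ring
  have hγ2pos : 0 < γ - 1/2 := by rw [hγ2]; positivity
  set k := Real.Gamma (γ - 1/2) / (Real.sqrt (2*(2*α-1)) * Real.Gamma γ) with hkdef
  have hkpos : 0 < k := by
    apply div_pos (Real.Gamma_pos_of_pos hγ2pos)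
    exact mul_pos (Real.sqrt_pos.2 (by positivity)) (Real.Gamma_pos_of_pos hγpos)
  have hqz : ∀ y : ℝ, 0 ≤ y^2*(2*α-1)/2 := fun y => by positivity
  have hGeq : ∀ y : ℝ, G α y
      = y * M γ (3/2) (y^2*(2*α-1)/2) + k * M (γ-1/2) (1/2) (y^2*(2*α-1)/2) :=
    fun y => rfl
  have hM2ge1 : ∀ y : ℝ, 1 ≤ M (γ-1/2) (1/2) (y^2*(2*α-1)/2) :=
    fun y => M_ge_one hγ2pos (by norm_num) (hqz y)
  have hM1ge1 : ∀ y : ℝ, 1 ≤ M γ (3/2) (y^2*(2*α-1)/2) :=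
    fun y => M_ge_one hγpos (by norm_num) (hqz y)
  have hM1ge : ∀ y : ℝ, 1 + γ*(y^2*(2*α-1)/2)/(3/2) ≤ M γ (3/2) (y^2*(2*α-1)/2) :=
    fun y => M_ge_linear hγpos (by norm_num) (hqz y)
  have hGdiff : ∀ y : ℝ, DifferentiableAt ℝ (G α) y := by
    intro y
    have hqd : DifferentiableAt ℝ (fun y : ℝ => y^2*(2*α-1)/2) y := by fun_prop
    have h1 : DifferentiableAt ℝ (fun y : ℝ => M γ (3/2) (y^2*(2*α-1)/2)) y :=
      (M_diff hγpos (by norm_num) _).comp y hqd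
    have h2 : DifferentiableAt ℝ (fun y : ℝ => M (γ-1/2) (1/2) (y^2*(2*α-1)/2)) y :=
      (M_diff hγ2pos (by norm_num) _).comp y hqd
    have hGfun : G α = fun y : ℝ =>
        y * M γ (3/2) (y^2*(2*α-1)/2) + k * M (γ-1/2) (1/2) (y^2*(2*α-1)/2) :=
      funext hGeq
    rw [hGfun]
    exact (differentiableAt_fun_id.mul h1).add (h2.const_mul k)
  set F : ℝ → ℝ := fun y => G α y / y with hFdef
  have hGk : ∀ y : ℝ, 0 < y → k ≤ G α y := by
    intro y hy
    rw [hGeq y]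
    have h1 : 0 ≤ y * M γ (3/2) (y^2*(2*α-1)/2) :=
      mul_nonneg hy.le (by linarith [hM1ge1 y])
    have h2 : k * 1 ≤ k * M (γ-1/2) (1/2) (y^2*(2*α-1)/2) :=
      mul_le_mul_of_nonneg_left (hM2ge1 y) hkpos.le
    linarith
  have h0 : Tendsto F (nhdsWithin 0 (Set.Ioi 0)) atTop := by
    apply tendsto_atTop_mono' _ _ (tendsto_inv_nhdsGT_zero.const_mul_atTop hkpos)
    filter_upwards [self_mem_nhdsWithin] with y (hy : (0:ℝ) < y)
    calc k * y⁻¹ = k / y := (div_eq_mul_inv k y).symm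
      _ ≤ G α y / y := by
          exact div_le_div_of_nonneg_right (hGk y hy) hy.le |>.trans_eq rfl
  have hC : 0 < γ*(2*α-1)/3 := by positivity
  have hinf : Tendsto F atTop atTop := by
    apply tendsto_atTop_mono' _ _
      ((tendsto_pow_atTop (by norm_num : 2 ≠ 0)).const_mul_atTop hC)
    filter_upwards [eventually_ge_atTop (1:ℝ)] with y hy1
    have hy0 : (0:ℝ) < y := lt_of_lt_of_le one_pos hy1
    have hG : y * M γ (3/2) (y^2*(2*α-1)/2) ≤ G α y := by
      rw [hGeq y]
      have h2 : 0 ≤ k * M (γ-1/2) (1/2) (y^2*(2*α-1)/2) :=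
        le_of_lt (mul_pos hkpos (by linarith [hM2ge1 y]))
      linarith
    have hstep : M γ (3/2) (y^2*(2*α-1)/2) ≤ F y := by
      have := div_le_div_of_nonneg_right hG hy0.le
      rwa [mul_div_cancel_left₀ _ hy0.ne'] at this
    have hring : γ*(y^2*(2*α-1)/2)/(3/2) = γ*(2*α-1)/3 * y^2 := by ring
    have hlin := hM1ge y
    rw [hring] at hlin
    calc γ*(2*α-1)/3 * y^2 ≤ 1 + γ*(2*α-1)/3*y^2 := by linarith
      _ ≤ M γ (3/2) (y^2*(2*α-1)/2) := hlin
      _ ≤ F y := hstep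
  -- extract bounds
  obtain ⟨a, (ha0 : (0:ℝ) < a), hasub⟩ :=
    mem_nhdsGT_iff_exists_Ioc_subset.1 (h0.eventually (eventually_gt_atTop (F 1)))
  obtain ⟨b, hb⟩ := eventually_atTop.1 (hinf.eventually (eventually_gt_atTop (F 1)))
  set lo := min a 1 / 2 with hlodef
  set hi := max b 2 with hhidef
  have hlo0 : 0 < lo := by positivity
  have hlo1 : lo < 1 := by
    have : min a 1 ≤ 1 := min_le_right a 1
    rw [hlodef]; linarith
  have hloa : lo ∈ Set.Ioc (0:ℝ) a := by
    constructor
    · exact hlo0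
    · have : min a 1 ≤ a := min_le_left a 1
      rw [hlodef]; linarith
  have hhi1 : (1:ℝ) < hi := by
    have : (2:ℝ) ≤ hi := le_max_right b 2
    linarith
  have hFlo : F 1 < F lo := hasub hloa
  have hFhi : F 1 < F hi := hb hi (le_max_left b 2)
  have hlohi : lo < hi := hlo1.trans hhi1
  have hFcont : ContinuousOn F (Set.Icc lo hi) := by
    intro y hy
    have hy0 : (0:ℝ) < y := lt_of_lt_of_le hlo0 hy.1
    exact ((hGdiff y).div differentiableAt_id hy0.ne').continuousAt.continuousWithinAt
  obtain ⟨B, hBmem, hBmin⟩ := isCompact_Icc.exists_isMinOn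
    ⟨lo, Set.left_mem_Icc.2 hlohi.le⟩ hFcont
  have hB0 : 0 < B := lt_of_lt_of_le hlo0 hBmem.1
  have hFB : F B ≤ F 1 := hBmin ⟨hlo1.le, hhi1.le⟩
  have hBlo : lo < B := lt_of_le_of_ne hBmem.1 (by rintro rfl; linarith)
  have hBhi : B < hi := lt_of_le_of_ne hBmem.2 (by rintro rfl; linarith)
  have hlocal : IsLocalMin F B := hBmin.isLocalMin (Icc_mem_nhds hBlo hBhi)
  have hFd : HasDerivAt F ((deriv (G α) B * B - G α B * 1)/B^2) B :=
    ((hGdiff B).hasDerivAt).div (hasDerivAt_id B) hB0.ne'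
  have hzero : (deriv (G α) B * B - G α B * 1)/B^2 = 0 := by
    rw [← hFd.deriv]; exact hlocal.deriv_eq_zero
  refine ⟨B, hB0, ?_⟩
  have hB2 : B^2 ≠ 0 := pow_ne_zero 2 hB0.ne'
  rw [_root_.div_eq_zero_iff] at hzero
  rcases hzero with h | h
  · show G α B = B * deriv (G α) B
    linarith [h]
  · exact absurd h hB2
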